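/- Let $X = [X_1; X_2]$ and $Y = [Y_1; Y_2]$ be random vectors in $\mathbb{R}^{d_1} \times \mathbb{R}^{d_2}$ with finite second moments such that the covariance matrices $\Sigma_{X_i}$ and $\Sigma_{Y_i}$ are positive definite for both $i \in \{1,2\}$. Then for any $k \in \mathbb{N}$ with $S_X$ and $S_Y$ nonempty, the Hausdorff distance (with respect to $\|\cdot\|_V$) satisfies $\operatorname{dist}(S_X, S_Y)^2 \le \max_{i \in \{1,2\}} \frac{\|\Sigma_{X_i} - \Sigma_{Y_i}\|_{2\to2}}{\lambda_{\min}(\Sigma_{X_i}) \cdot \lambda_{\min}(\Sigma_{Y_i})}$. -/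

import Mathlib

open Matrix MeasureTheory
open scoped Matrix.Norms.L2Operator

section Helpers
variable {n : Type*} [Fintype n] [DecidableEq n]

open scoped MatrixOrder in
noncomputable def Matrix.PosSemidef.sqrt {A : Matrix n n ℝ} (_hA : A.PosSemidef) : Matrix n n ℝ :=
  CFC.sqrt A

open scoped MatrixOrder in
lemma Matrix.PosSemidef.posSemidef_sqrt {A : Matrix n n ℝ} (hA : A.PosSemidef) :
    hA.sqrt.PosSemidef :=
  Matrix.LE.le.posSemidef (CFC.sqrt_nonneg A)

open scoped MatrixOrder in
lemma Matrix.PosSemidef.sqrt_mul_self {A : Matrix n n ℝ} (hA : A.PosSemidef) :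
    hA.sqrt * hA.sqrt = A :=
  CFC.sqrt_mul_sqrt_self A hA.nonneg

namespace Scratch

lemma eigCLM {M : Matrix n n ℝ} (hM : M.IsHermitian) (j : n) :
    toEuclideanCLM (𝕜 := ℝ) M (hM.eigenvectorBasis j) =
      hM.eigenvalues j • hM.eigenvectorBasis j := by
  apply (WithLp.equiv 2 (n → ℝ)).injective
  simp only [WithLp.equiv_apply, ofLp_toEuclideanCLM, WithLp.ofLp_smul]
  simpa [Matrix.toLin'_apply] using hM.mulVec_eigenvectorBasis j

lemma symmCLM {M : Matrix n n ℝ} (hM : M.IsHermitian) (x y : EuclideanSpace ℝ n) :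
    (inner ℝ (toEuclideanCLM (𝕜 := ℝ) M x) y : ℝ) = inner ℝ x (toEuclideanCLM (𝕜 := ℝ) M y) :=
  (Matrix.isHermitian_iff_isSymmetric.1 hM) x y

lemma reprCLM {M : Matrix n n ℝ} (hM : M.IsHermitian) (x : EuclideanSpace ℝ n) (j : n) :
    hM.eigenvectorBasis.repr (toEuclideanCLM (𝕜 := ℝ) M x) j
      = hM.eigenvalues j * hM.eigenvectorBasis.repr x j := by
  rw [OrthonormalBasis.repr_apply_apply, OrthonormalBasis.repr_apply_apply,
    ← symmCLM hM, eigCLM hM j, real_inner_smul_left]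

lemma norm_le_of_eigs {M : Matrix n n ℝ} (hM : M.IsHermitian) {c : ℝ} (hc : 0 ≤ c)
    (h : ∀ i, |hM.eigenvalues i| ≤ c) : ‖M‖ ≤ c := by
  rw [Matrix.cstar_norm_def]
  refine ContinuousLinearMap.opNorm_le_bound _ hc fun x => ?_
  set b := hM.eigenvectorBasis with hb
  rw [← b.repr.norm_map (toEuclideanCLM (𝕜 := ℝ) M x), ← b.repr.norm_map x]
  rw [EuclideanSpace.norm_eq, EuclideanSpace.norm_eq]
  rw [← Real.sqrt_sq hc, ← Real.sqrt_mul (by positivity)]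
  apply Real.sqrt_le_sqrt
  rw [Finset.mul_sum]
  apply Finset.sum_le_sum
  intro i _
  rw [reprCLM hM]
  have h1 : |hM.eigenvalues i * b.repr x i| ≤ c * |b.repr x i| := by
    rw [abs_mul]
    exact mul_le_mul_of_nonneg_right (h i) (abs_nonneg _)
  calc ‖hM.eigenvalues i * b.repr x i‖ ^ 2 = |hM.eigenvalues i * b.repr x i| ^ 2 := by
        rw [Real.norm_eq_abs]
    _ ≤ (c * |b.repr x i|) ^ 2 := by
        exact pow_le_pow_left₀ (abs_nonneg _) h1 2
    _ = c ^ 2 * ‖b.repr x i‖ ^ 2 := by rw [mul_pow, Real.norm_eq_abs, sq_abs]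

lemma rayleigh_le [Nonempty n] {M : Matrix n n ℝ} (hM : M.IsHermitian) (x : EuclideanSpace ℝ n) :
    (⨅ i, hM.eigenvalues i) * ‖x‖ ^ 2 ≤ inner ℝ x (toEuclideanCLM (𝕜 := ℝ) M x) := by
  set b := hM.eigenvectorBasis with hb
  have h1 : (inner ℝ x (toEuclideanCLM (𝕜 := ℝ) M x) : ℝ)
      = ∑ i, hM.eigenvalues i * (b.repr x i) ^ 2 := by
    rw [← b.repr.inner_map_map x (toEuclideanCLM (𝕜 := ℝ) M x)]
    rw [PiLp.inner_apply]
    refine Finset.sum_congr rfl fun i _ => ?_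
    rw [reprCLM hM]
    simp [RCLike.inner_apply, sq]
    ring
  have h2 : ‖x‖ ^ 2 = ∑ i, (b.repr x i) ^ 2 := by
    rw [← b.repr.norm_map x, EuclideanSpace.norm_eq, Real.sq_sqrt (by positivity)]
    simp [Real.norm_eq_abs, sq_abs]
  rw [h1, h2, Finset.mul_sum]
  apply Finset.sum_le_sum
  intro i _
  exact mul_le_mul_of_nonneg_right (ciInf_le (Finite.bddBelow_range _) i) (sq_nonneg _)


lemma iInf_eig_pos [Nonempty n] {M : Matrix n n ℝ} (hM : M.PosDef) :
    0 < ⨅ i, hM.1.eigenvalues i := by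
  obtain ⟨j, hj⟩ := Finite.exists_min hM.1.eigenvalues
  exact lt_of_lt_of_le (hM.eigenvalues_pos j) (le_ciInf hj)

lemma inv_norm_le [Nonempty n] {M : Matrix n n ℝ} (hM : M.PosDef) :
    ‖M⁻¹‖ ≤ 1 / ⨅ i, hM.1.eigenvalues i := by
  have hpos := iInf_eig_pos hM
  rw [Matrix.cstar_norm_def]
  refine ContinuousLinearMap.opNorm_le_bound _ (by positivity) fun x => ?_
  set y := toEuclideanCLM (𝕜 := ℝ) M⁻¹ x with hy
  have hxy : toEuclideanCLM (𝕜 := ℝ) M y = x := by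
    rw [hy, ← ContinuousLinearMap.comp_apply, ← ContinuousLinearMap.mul_def, ← _root_.map_mul,
      Matrix.mul_nonsing_inv M (isUnit_iff_ne_zero.2 hM.det_pos.ne'), _root_.map_one,
      ContinuousLinearMap.one_apply]
  have h1 : (⨅ i, hM.1.eigenvalues i) * ‖y‖ ^ 2 ≤ ‖y‖ * ‖x‖ := by
    calc (⨅ i, hM.1.eigenvalues i) * ‖y‖ ^ 2 ≤ inner ℝ y (toEuclideanCLM (𝕜 := ℝ) M y) :=
          rayleigh_le hM.1 y
      _ = inner ℝ y x := by rw [hxy]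
      _ ≤ ‖y‖ * ‖x‖ := real_inner_le_norm y x
  rcases eq_or_lt_of_le (norm_nonneg y) with h0 | h0
  · rw [← h0]; positivity
  · rw [div_mul_eq_mul_div, one_mul, le_div_iff₀ hpos]
    nlinarith [h1, h0]

lemma sqrt_lipschitz [Nonempty n] {A B : Matrix n n ℝ} (hA : A.PosSemidef) (hB : B.PosSemidef) :
    ‖hA.sqrt - hB.sqrt‖ ^ 2 ≤ ‖A - B‖ := by
  set S := hA.sqrt with hSdef
  set T := hB.sqrt with hTdef
  have hS : S.PosSemidef := hA.posSemidef_sqrt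
  have hT : T.PosSemidef := hB.posSemidef_sqrt
  have hD : (S - T).IsHermitian := hS.1.sub hT.1
  obtain ⟨j, hj⟩ := Finite.exists_max (fun i => |hD.eigenvalues i|)
  set μ := hD.eigenvalues j with hμ
  set v := hD.eigenvectorBasis j with hv
  have hvnorm : ‖v‖ = 1 := hD.eigenvectorBasis.orthonormal.1 j
  have hDv : toEuclideanCLM (𝕜 := ℝ) (S - T) v = μ • v := eigCLM hD j
  set sv : ℝ := inner ℝ v (toEuclideanCLM (𝕜 := ℝ) S v) with hsv
  set tv : ℝ := inner ℝ v (toEuclideanCLM (𝕜 := ℝ) T v) with htv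
  have hsv0 : 0 ≤ sv := by
    have := rayleigh_le hS.1 v
    have h0 : 0 ≤ ⨅ i, hS.1.eigenvalues i := le_ciInf fun i => hS.eigenvalues_nonneg i
    nlinarith [this]
  have htv0 : 0 ≤ tv := by
    have := rayleigh_le hT.1 v
    have h0 : 0 ≤ ⨅ i, hT.1.eigenvalues i := le_ciInf fun i => hT.eigenvalues_nonneg i
    nlinarith [this]
  have hsub : sv - tv = μ := by
    rw [hsv, htv, ← inner_sub_right]
    have : toEuclideanCLM (𝕜 := ℝ) S v - toEuclideanCLM (𝕜 := ℝ) T v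
        = toEuclideanCLM (𝕜 := ℝ) (S - T) v := by
      rw [map_sub]; rfl
    rw [this, hDv, real_inner_smul_right, real_inner_self_eq_norm_sq, hvnorm]
    ring
  have hAB : A - B = S * (S - T) + (S - T) * T := by
    rw [mul_sub, sub_mul, hA.sqrt_mul_self, hB.sqrt_mul_self]
    abel
  have hform : (inner ℝ v (toEuclideanCLM (𝕜 := ℝ) (A - B) v) : ℝ) = μ * (sv + tv) := by
    rw [hAB, map_add, _root_.map_mul]
    rw [ContinuousLinearMap.add_apply, inner_add_right, ContinuousLinearMap.mul_apply, hDv]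
    rw [ContinuousLinearMap.map_smul, real_inner_smul_right]
    have h2 : (inner ℝ v ((toEuclideanCLM (𝕜 := ℝ) (S - T)) ((toEuclideanCLM (𝕜 := ℝ) T) v)) : ℝ)
        = μ * tv := by
      rw [← symmCLM hD, hDv, real_inner_smul_left]
    rw [_root_.map_mul, ContinuousLinearMap.mul_apply, h2]
    ring
  have habs : |μ| ≤ sv + tv := by
    rw [← hsub]
    calc |sv - tv| ≤ |sv| + |tv| := abs_sub _ _
      _ = sv + tv := by rw [abs_of_nonneg hsv0, abs_of_nonneg htv0]
  have hμsq : μ ^ 2 ≤ ‖A - B‖ := by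
    have h3 : |(inner ℝ v (toEuclideanCLM (𝕜 := ℝ) (A - B) v) : ℝ)| ≤ ‖A - B‖ := by
      calc |(inner ℝ v (toEuclideanCLM (𝕜 := ℝ) (A - B) v) : ℝ)|
          ≤ ‖v‖ * ‖toEuclideanCLM (𝕜 := ℝ) (A - B) v‖ := abs_real_inner_le_norm _ _
        _ ≤ ‖v‖ * (‖toEuclideanCLM (𝕜 := ℝ) (A - B)‖ * ‖v‖) := by
            exact mul_le_mul_of_nonneg_left ((toEuclideanCLM (𝕜 := ℝ) (A - B)).le_opNorm v)
              (norm_nonneg v)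
        _ = ‖A - B‖ := by rw [hvnorm, ← Matrix.cstar_norm_def]; ring
    calc μ ^ 2 = |μ| * |μ| := by rw [sq, ← abs_mul_abs_self]
      _ ≤ (sv + tv) * |μ| := mul_le_mul_of_nonneg_right habs (abs_nonneg _)
      _ = |μ * (sv + tv)| := by
          rw [abs_mul, abs_of_nonneg (le_trans (abs_nonneg μ) habs)]; ring
      _ = |(inner ℝ v (toEuclideanCLM (𝕜 := ℝ) (A - B) v) : ℝ)| := by rw [hform]
      _ ≤ ‖A - B‖ := h3
  have hnorm : ‖S - T‖ ≤ |μ| := norm_le_of_eigs hD (abs_nonneg _) hj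
  calc ‖S - T‖ ^ 2 ≤ |μ| ^ 2 := pow_le_pow_left₀ (norm_nonneg _) hnorm 2
    _ = μ ^ 2 := sq_abs μ
    _ ≤ ‖A - B‖ := hμsq

lemma norm_one_le_one {k : ℕ} : ‖(1 : Matrix (Fin k) (Fin k) ℝ)‖ ≤ 1 := by
  rw [Matrix.cstar_norm_def, _root_.map_one]
  rw [ContinuousLinearMap.one_def]
  exact ContinuousLinearMap.norm_id_le

lemma block {d k : ℕ} (hd : 0 < d) {M N : Matrix (Fin d) (Fin d) ℝ}
    (hM : M.PosDef) (hN : N.PosDef) {A : Matrix (Fin k) (Fin d) ℝ}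
    (hA : A * M * Aᵀ = 1) :
    ∃ B : Matrix (Fin k) (Fin d) ℝ, B * N * Bᵀ = 1 ∧
      ‖A - B‖ ≤ Real.sqrt (‖M - N‖ /
        ((⨅ i, hM.1.eigenvalues i) * (⨅ i, hN.1.eigenvalues i))) := by
  haveI : Nonempty (Fin d) := Fin.pos_iff_nonempty.mp hd
  set lM := ⨅ i, hM.1.eigenvalues i with hlM
  set lN := ⨅ i, hN.1.eigenvalues i with hlN
  have hlMpos : 0 < lM := iInf_eig_pos hM
  have hlNpos : 0 < lN := iInf_eig_pos hN
  set S := hM.posSemidef.sqrt with hSdef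
  set T := hN.posSemidef.sqrt with hTdef
  have hSS : S * S = M := hM.posSemidef.sqrt_mul_self
  have hTT : T * T = N := hN.posSemidef.sqrt_mul_self
  have hSt : Sᵀ = S := by
    rw [← Matrix.conjTranspose_eq_transpose_of_trivial]
    exact hM.posSemidef.posSemidef_sqrt.1
  have hTt : Tᵀ = T := by
    rw [← Matrix.conjTranspose_eq_transpose_of_trivial]
    exact hN.posSemidef.posSemidef_sqrt.1
  have hdetS : IsUnit S.det := by
    rw [isUnit_iff_ne_zero]
    intro h
    have : M.det = 0 := by rw [← hSS, Matrix.det_mul, h, mul_zero]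
    exact hM.det_pos.ne' this
  have hdetT : IsUnit T.det := by
    rw [isUnit_iff_ne_zero]
    intro h
    have : N.det = 0 := by rw [← hTT, Matrix.det_mul, h, mul_zero]
    exact hN.det_pos.ne' this
  have hS1 : S * S⁻¹ = 1 := Matrix.mul_nonsing_inv S hdetS
  have hS2 : S⁻¹ * S = 1 := Matrix.nonsing_inv_mul S hdetS
  have hT1 : T * T⁻¹ = 1 := Matrix.mul_nonsing_inv T hdetT
  have hT2 : T⁻¹ * T = 1 := Matrix.nonsing_inv_mul T hdetT
  refine ⟨A * S * T⁻¹, ?_, ?_⟩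
  · have ht : (A * S * T⁻¹)ᵀ = T⁻¹ * (S * Aᵀ) := by
      rw [Matrix.transpose_mul, Matrix.transpose_mul, Matrix.transpose_nonsing_inv, hTt, hSt]
    rw [ht, ← hTT]
    calc A * S * T⁻¹ * (T * T) * (T⁻¹ * (S * Aᵀ))
        = A * (S * ((T⁻¹ * T) * ((T * T⁻¹) * (S * Aᵀ)))) := by
          simp only [Matrix.mul_assoc]
      _ = A * M * Aᵀ := by
          rw [hT1, hT2, Matrix.one_mul, Matrix.one_mul, ← hSS]
          simp only [Matrix.mul_assoc]
      _ = 1 := hA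
  · -- norm bound
    have hAS : (A * S) * (A * S)ᵀ = 1 := by
      rw [Matrix.transpose_mul, hSt]
      calc A * S * (S * Aᵀ) = A * M * Aᵀ := by rw [← hSS]; simp only [Matrix.mul_assoc]
        _ = 1 := hA
    have hASnorm : ‖A * S‖ ≤ 1 := by
      have h1 : ‖A * S‖ * ‖A * S‖ = ‖(A * S) * (A * S)ᵀ‖ := by
        have := Matrix.l2_opNorm_conjTranspose_mul_self (A * S)ᴴ
        rw [Matrix.conjTranspose_conjTranspose, Matrix.l2_opNorm_conjTranspose] at this
        rw [← Matrix.conjTranspose_eq_transpose_of_trivial (A * S)]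
        exact this.symm
      rw [hAS] at h1
      nlinarith [norm_one_le_one (k := k), norm_nonneg (A * S)]
    have hSinv : ‖S⁻¹‖ ≤ Real.sqrt (1 / lM) := by
      have h1 : ‖S⁻¹‖ * ‖S⁻¹‖ = ‖S⁻¹ * S⁻¹‖ := by
        have := Matrix.l2_opNorm_conjTranspose_mul_self S⁻¹
        rw [Matrix.conjTranspose_eq_transpose_of_trivial, Matrix.transpose_nonsing_inv, hSt]
          at this
        exact this.symm
      have h2 : S⁻¹ * S⁻¹ = M⁻¹ := by rw [← hSS, Matrix.mul_inv_rev]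
      have h3 : ‖S⁻¹‖ * ‖S⁻¹‖ ≤ 1 / lM := by
        rw [h1, h2]; exact inv_norm_le hM
      have := Real.sqrt_le_sqrt h3
      rwa [Real.sqrt_mul_self (norm_nonneg _)] at this
    have hTinv : ‖T⁻¹‖ ≤ Real.sqrt (1 / lN) := by
      have h1 : ‖T⁻¹‖ * ‖T⁻¹‖ = ‖T⁻¹ * T⁻¹‖ := by
        have := Matrix.l2_opNorm_conjTranspose_mul_self T⁻¹
        rw [Matrix.conjTranspose_eq_transpose_of_trivial, Matrix.transpose_nonsing_inv, hTt]
          at this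
        exact this.symm
      have h2 : T⁻¹ * T⁻¹ = N⁻¹ := by rw [← hTT, Matrix.mul_inv_rev]
      have h3 : ‖T⁻¹‖ * ‖T⁻¹‖ ≤ 1 / lN := by
        rw [h1, h2]; exact inv_norm_le hN
      have := Real.sqrt_le_sqrt h3
      rwa [Real.sqrt_mul_self (norm_nonneg _)] at this
    have hST : ‖S - T‖ ≤ Real.sqrt ‖M - N‖ := by
      have := sqrt_lipschitz hM.posSemidef hN.posSemidef
      have h2 := Real.sqrt_le_sqrt this
      rwa [Real.sqrt_sq (norm_nonneg _)] at h2
    have hdiff : A - A * S * T⁻¹ = (A * S) * (S⁻¹ - T⁻¹) := by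
      rw [Matrix.mul_sub, Matrix.mul_assoc A S S⁻¹, hS1, Matrix.mul_one]
    have hid : S⁻¹ - T⁻¹ = S⁻¹ * (T - S) * T⁻¹ := by
      rw [Matrix.mul_sub, Matrix.sub_mul, Matrix.mul_assoc, hT1, Matrix.mul_one, hS2,
        Matrix.one_mul]
    have hchain : ‖A - A * S * T⁻¹‖ ≤ Real.sqrt (1 / lM) * Real.sqrt ‖M - N‖
        * Real.sqrt (1 / lN) := by
      rw [hdiff]
      calc ‖(A * S) * (S⁻¹ - T⁻¹)‖ ≤ ‖A * S‖ * ‖S⁻¹ - T⁻¹‖ := Matrix.l2_opNorm_mul _ _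
        _ ≤ 1 * ‖S⁻¹ - T⁻¹‖ := by
            exact mul_le_mul_of_nonneg_right hASnorm (norm_nonneg _)
        _ = ‖S⁻¹ * (T - S) * T⁻¹‖ := by rw [one_mul, hid]
        _ ≤ ‖S⁻¹ * (T - S)‖ * ‖T⁻¹‖ := Matrix.l2_opNorm_mul _ _
        _ ≤ ‖S⁻¹‖ * ‖T - S‖ * ‖T⁻¹‖ := by
            exact mul_le_mul_of_nonneg_right (Matrix.l2_opNorm_mul _ _) (norm_nonneg _)
        _ = ‖S⁻¹‖ * ‖S - T‖ * ‖T⁻¹‖ := by rw [norm_sub_rev]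
        _ ≤ Real.sqrt (1 / lM) * Real.sqrt ‖M - N‖ * Real.sqrt (1 / lN) := by
            apply mul_le_mul
            · apply mul_le_mul hSinv hST (norm_nonneg _) (Real.sqrt_nonneg _)
            · exact hTinv
            · exact norm_nonneg _
            · positivity
    refine hchain.trans (le_of_eq ?_)
    rw [← Real.sqrt_mul (by positivity), ← Real.sqrt_mul (by positivity)]
    congr 1
    field_simp

end Scratch
end Helpers

set_option maxHeartbeats 1000000 in
/-- Let `X` and `Y` be random vectors in `ℝ^{d₁} × ℝ^{d₂}` with finite second
moments and positive definite component covariances. For the feasible sets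
`S_X = {(A₁,A₂) : Aᵢ Σ_{Xᵢ} Aᵢᵀ = I_k}` (and similarly `S_Y`), nonempty, the Hausdorff
distance with respect to `‖·‖_V = max{‖·‖₂→₂, ‖·‖₂→₂}` (the product norm of the scoped
spectral norms) satisfies
`dist(S_X, S_Y)² ≤ max_i ‖Σ_{Xᵢ} - Σ_{Yᵢ}‖₂→₂ / (λ_min(Σ_{Xᵢ}) λ_min(Σ_{Yᵢ}))`. -/
theorem hausdorff_dist_sq_le {Ω₁ Ω₂ : Type*} [MeasurableSpace Ω₁] [MeasurableSpace Ω₂]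
    (P : Measure Ω₁) (Q : Measure Ω₂) [IsProbabilityMeasure P] [IsProbabilityMeasure Q]
    (d₁ d₂ k : ℕ) (hd₁ : 0 < d₁) (hd₂ : 0 < d₂)
    (X : Ω₁ → (Fin d₁ → ℝ) × (Fin d₂ → ℝ)) (Y : Ω₂ → (Fin d₁ → ℝ) × (Fin d₂ → ℝ))
    (hX : Measurable X) (hY : Measurable Y)
    (hX2 : MemLp X 2 P) (hY2 : MemLp Y 2 Q)
    (SigX₁ : Matrix (Fin d₁) (Fin d₁) ℝ)
    (hSigX₁ : SigX₁ = Matrix.of fun a b => ∫ ω,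
      ((X ω).1 a - (∫ ω', (X ω').1 ∂P) a) * ((X ω).1 b - (∫ ω', (X ω').1 ∂P) b) ∂P)
    (SigX₂ : Matrix (Fin d₂) (Fin d₂) ℝ)
    (hSigX₂ : SigX₂ = Matrix.of fun a b => ∫ ω,
      ((X ω).2 a - (∫ ω', (X ω').2 ∂P) a) * ((X ω).2 b - (∫ ω', (X ω').2 ∂P) b) ∂P)
    (SigY₁ : Matrix (Fin d₁) (Fin d₁) ℝ)
    (hSigY₁ : SigY₁ = Matrix.of fun a b => ∫ ω,
      ((Y ω).1 a - (∫ ω', (Y ω').1 ∂Q) a) * ((Y ω).1 b - (∫ ω', (Y ω').1 ∂Q) b) ∂Q)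
    (SigY₂ : Matrix (Fin d₂) (Fin d₂) ℝ)
    (hSigY₂ : SigY₂ = Matrix.of fun a b => ∫ ω,
      ((Y ω).2 a - (∫ ω', (Y ω').2 ∂Q) a) * ((Y ω).2 b - (∫ ω', (Y ω').2 ∂Q) b) ∂Q)
    (hpdX₁ : SigX₁.PosDef) (hpdX₂ : SigX₂.PosDef) (hpdY₁ : SigY₁.PosDef) (hpdY₂ : SigY₂.PosDef)
    (SX SY : Set (Matrix (Fin k) (Fin d₁) ℝ × Matrix (Fin k) (Fin d₂) ℝ))
    (hSX : SX = {A | A.1 * SigX₁ * A.1ᵀ = 1 ∧ A.2 * SigX₂ * A.2ᵀ = 1})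
    (hSY : SY = {A | A.1 * SigY₁ * A.1ᵀ = 1 ∧ A.2 * SigY₂ * A.2ᵀ = 1})
    (hSXne : SX.Nonempty) (hSYne : SY.Nonempty) :
    EMetric.hausdorffEdist SX SY ^ 2 ≤ ENNReal.ofReal (max
      (‖SigX₁ - SigY₁‖ / ((⨅ i, hpdX₁.1.eigenvalues i) * (⨅ i, hpdY₁.1.eigenvalues i)))
      (‖SigX₂ - SigY₂‖ / ((⨅ i, hpdX₂.1.eigenvalues i) * (⨅ i, hpdY₂.1.eigenvalues i)))) := by
  haveI n1 : Nonempty (Fin d₁) := Fin.pos_iff_nonempty.mp hd₁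
  haveI n2 : Nonempty (Fin d₂) := Fin.pos_iff_nonempty.mp hd₂
  set a₁ := ‖SigX₁ - SigY₁‖ / ((⨅ i, hpdX₁.1.eigenvalues i) * (⨅ i, hpdY₁.1.eigenvalues i))
    with ha₁
  set a₂ := ‖SigX₂ - SigY₂‖ / ((⨅ i, hpdX₂.1.eigenvalues i) * (⨅ i, hpdY₂.1.eigenvalues i))
    with ha₂
  have ha₁0 : 0 ≤ a₁ :=
    div_nonneg (norm_nonneg _)
      (le_of_lt (mul_pos (Scratch.iInf_eig_pos hpdX₁) (Scratch.iInf_eig_pos hpdY₁)))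
  have ha₂0 : 0 ≤ a₂ :=
    div_nonneg (norm_nonneg _)
      (le_of_lt (mul_pos (Scratch.iInf_eig_pos hpdX₂) (Scratch.iInf_eig_pos hpdY₂)))
  set r := max a₁ a₂ with hr
  have hr0 : 0 ≤ r := le_trans ha₁0 (le_max_left _ _)
  have key : EMetric.hausdorffEdist SX SY ≤ ENNReal.ofReal (Real.sqrt r) := by
    apply EMetric.hausdorffEdist_le_of_mem_edist
    · rintro x hx
      rw [hSX] at hx
      obtain ⟨B₁, hB₁, hB₁n⟩ := Scratch.block hd₁ hpdX₁ hpdY₁ hx.1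
      obtain ⟨B₂, hB₂, hB₂n⟩ := Scratch.block hd₂ hpdX₂ hpdY₂ hx.2
      refine ⟨(B₁, B₂), by rw [hSY]; exact ⟨hB₁, hB₂⟩, ?_⟩
      rw [Prod.edist_eq]
      apply max_le
      · rw [edist_dist, dist_eq_norm]
        apply ENNReal.ofReal_le_ofReal
        exact hB₁n.trans (Real.sqrt_le_sqrt (le_max_left a₁ a₂))
      · rw [edist_dist, dist_eq_norm]
        apply ENNReal.ofReal_le_ofReal
        exact hB₂n.trans (Real.sqrt_le_sqrt (le_max_right a₁ a₂))
    · rintro y hy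
      rw [hSY] at hy
      obtain ⟨B₁, hB₁, hB₁n⟩ := Scratch.block hd₁ hpdY₁ hpdX₁ hy.1
      obtain ⟨B₂, hB₂, hB₂n⟩ := Scratch.block hd₂ hpdY₂ hpdX₂ hy.2
      have e₁ : ‖SigY₁ - SigX₁‖ / ((⨅ i, hpdY₁.1.eigenvalues i) * (⨅ i, hpdX₁.1.eigenvalues i))
          = a₁ := by rw [ha₁, norm_sub_rev, mul_comm]
      have e₂ : ‖SigY₂ - SigX₂‖ / ((⨅ i, hpdY₂.1.eigenvalues i) * (⨅ i, hpdX₂.1.eigenvalues i))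
          = a₂ := by rw [ha₂, norm_sub_rev, mul_comm]
      rw [e₁] at hB₁n
      rw [e₂] at hB₂n
      refine ⟨(B₁, B₂), by rw [hSX]; exact ⟨hB₁, hB₂⟩, ?_⟩
      rw [Prod.edist_eq]
      apply max_le
      · rw [edist_dist, dist_eq_norm]
        apply ENNReal.ofReal_le_ofReal
        exact hB₁n.trans (Real.sqrt_le_sqrt (le_max_left a₁ a₂))
      · rw [edist_dist, dist_eq_norm]
        apply ENNReal.ofReal_le_ofReal
        exact hB₂n.trans (Real.sqrt_le_sqrt (le_max_right a₁ a₂))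
  calc EMetric.hausdorffEdist SX SY ^ 2 ≤ ENNReal.ofReal (Real.sqrt r) ^ 2 :=
        pow_le_pow_left' key 2
    _ = ENNReal.ofReal (Real.sqrt r ^ 2) := (ENNReal.ofReal_pow (Real.sqrt_nonneg r) 2).symm
    _ = ENNReal.ofReal r := by rw [Real.sq_sqrt hr0]
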